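/- Let u : ℝ → ℝ be positive and C², and let q ≥ 0, m > 1. Define v(x) = ∫₀^{u(x)} exp(s^{q+1}/((q+1)(m−1))) ds. Then at any point where u'(x) ≠ 0, one has (m−1)|v'|^{m−2} v'' = exp((m−1)·u^{q+1}/((q+1)(m−1)))·[(m−1)|u'|^{m−2}u'' + u^q |u'|^m], so that if (m−1)|u'|^{m−2}u'' = −u^q|u'|^m then v is m-harmonic (|v'|^{m−2}v' has zero derivative). -/

import Mathlib

open Real

lemma absrpow_hasDerivAt {m t : ℝ} (hm : 1 < m) (ht : t ≠ 0) :
    HasDerivAt (fun s : ℝ => |s| ^ (m - 2) * s) ((m - 1) * |t| ^ (m - 2)) t := by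
  rcases ht.lt_or_gt with h | h
  · -- t < 0
    have hnt : (0:ℝ) < -t := by linarith
    have h1 : HasDerivAt (fun s : ℝ => (-s) ^ (m - 2)) ((m - 2) * (-t) ^ (m - 2 - 1) * (-1)) t :=
      (Real.hasDerivAt_rpow_const (p := m - 2) (x := -t) (Or.inl hnt.ne')).comp t
        (hasDerivAt_id t).neg
    have h2 : HasDerivAt (fun s : ℝ => (-s) ^ (m - 2) * s)
        ((m - 2) * (-t) ^ (m - 2 - 1) * (-1) * t + (-t) ^ (m - 2) * 1) t :=
      h1.mul (hasDerivAt_id t)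
    have heq : (fun s : ℝ => (-s) ^ (m - 2) * s) =ᶠ[nhds t] fun s : ℝ => |s| ^ (m - 2) * s := by
      filter_upwards [IsOpen.mem_nhds isOpen_Iio h] with s hs
      rw [abs_of_neg hs]
    have h3 := h2.congr_of_eventuallyEq heq.symm
    refine h3.congr_deriv ?_
    rw [abs_of_neg h]
    have e1 := Real.rpow_add_one hnt.ne' (m - 2 - 1)
    rw [show m - 2 - 1 + 1 = m - 2 by ring] at e1
    rw [e1]; ring
  · -- t > 0
    have h1 : HasDerivAt (fun s : ℝ => s ^ (m - 1)) ((m - 1) * t ^ (m - 1 - 1)) t :=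
      Real.hasDerivAt_rpow_const (Or.inl h.ne')
    have heq : (fun s : ℝ => s ^ (m - 1)) =ᶠ[nhds t] fun s : ℝ => |s| ^ (m - 2) * s := by
      filter_upwards [IsOpen.mem_nhds isOpen_Ioi h] with s hs
      rw [abs_of_pos hs, show m - 1 = (m - 2) + 1 by ring, Real.rpow_add_one hs.ne']
    have h3 := h1.congr_of_eventuallyEq heq.symm
    refine h3.congr_deriv ?_
    rw [abs_of_pos h]
    ring_nf

theorem stmt_6 (u : ℝ → ℝ) (hu : ∀ x, 0 < u x) (hu2 : ContDiff ℝ 2 u)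
    (q m : ℝ) (hq : 0 ≤ q) (hm : 1 < m)
    (v : ℝ → ℝ)
    (hv : v = fun x => ∫ s in (0:ℝ)..(u x), Real.exp (s ^ (q + 1) / ((q + 1) * (m - 1))))
    (x : ℝ) (hx : deriv u x ≠ 0) :
    (m - 1) * |deriv v x| ^ (m - 2) * deriv (deriv v) x =
      Real.exp ((m - 1) * (u x) ^ (q + 1) / ((q + 1) * (m - 1))) *
        ((m - 1) * |deriv u x| ^ (m - 2) * deriv (deriv u) x +
          (u x) ^ q * |deriv u x| ^ m) ∧
    ((m - 1) * |deriv u x| ^ (m - 2) * deriv (deriv u) x =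
        -(u x) ^ q * |deriv u x| ^ m →
      deriv (fun y => |deriv v y| ^ (m - 2) * deriv v y) x = 0) := by
  have hm1 : m - 1 ≠ 0 := by linarith
  have hq1 : q + 1 ≠ 0 := by linarith
  set g : ℝ → ℝ := fun s => Real.exp (s ^ (q + 1) / ((q + 1) * (m - 1))) with hg
  have hgc : Continuous g := by
    exact (Real.continuous_rpow_const (by linarith) |>.div_const _).rexp
  have hgd : ∀ t : ℝ, HasDerivAt g (g t * (t ^ q / (m - 1))) t := by
    intro t
    have h1 : HasDerivAt (fun s : ℝ => s ^ (q + 1) / ((q + 1) * (m - 1)))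
        ((q + 1) * t ^ (q + 1 - 1) / ((q + 1) * (m - 1))) t :=
      (Real.hasDerivAt_rpow_const (Or.inr (by linarith))).div_const _
    have h2 := h1.exp
    convert h2 using 1
    rw [show q + 1 - 1 = q by ring]
    rw [mul_div_mul_left _ _ hq1]
  have hu' : Differentiable ℝ u := hu2.differentiable (by norm_num)
  have hu'' : ContDiff ℝ 1 (deriv u) := by
    have := (contDiff_succ_iff_deriv (n := 1)).mp (by exact_mod_cast hu2)
    exact this.2.2
  have hud2 : Differentiable ℝ (deriv u) := hu''.differentiable (by norm_num)
  -- derivative of v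
  have hvd : ∀ y : ℝ, HasDerivAt v (g (u y) * deriv u y) y := by
    intro y
    rw [hv]
    exact ((hgc.integral_hasStrictDerivAt 0 (u y)).hasDerivAt).comp y (hu' y).hasDerivAt
  have hdv : deriv v = fun y => g (u y) * deriv u y := funext fun y => (hvd y).deriv
  set a := deriv u x with ha
  set b := deriv (deriv u) x with hb
  set E := g (u x) with hE
  have hEpos : 0 < E := Real.exp_pos _
  have hApos : 0 < |a| := abs_pos.mpr hx
  -- second derivative of v
  have hvd2 : HasDerivAt (deriv v) (E * ((u x) ^ q / (m - 1)) * a * a + E * b) x := by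
    rw [hdv]
    have h1 : HasDerivAt (fun y => g (u y)) (E * ((u x) ^ q / (m - 1)) * a) x :=
      (hgd (u x)).comp x (hu' x).hasDerivAt
    have h2 := h1.mul (hud2 x).hasDerivAt
    exact h2
  have hddv : deriv (deriv v) x = E * ((u x) ^ q / (m - 1)) * a * a + E * b := hvd2.deriv
  have hdvx : deriv v x = E * a := by rw [hdv]
  -- key rpow identities
  have hEA : |E * a| ^ (m - 2) = E ^ (m - 2) * |a| ^ (m - 2) := by
    rw [abs_mul, abs_of_pos hEpos, Real.mul_rpow hEpos.le (abs_nonneg a)]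
  have hE2 : E ^ (m - 2) * E = E ^ (m - 1) := by
    rw [show m - 1 = (m - 2) + 1 by ring, Real.rpow_add_one hEpos.ne']
  have hAm : |a| ^ m = |a| ^ (m - 2) * a ^ 2 := by
    have e1 := Real.rpow_add hApos (m - 2) 2
    rw [show m - 2 + 2 = m by ring] at e1
    rw [e1, Real.rpow_two, sq_abs]
  have hexp : Real.exp ((m - 1) * (u x) ^ (q + 1) / ((q + 1) * (m - 1))) = E ^ (m - 1) := by
    rw [hE, hg, Real.rpow_def_of_pos (Real.exp_pos _), Real.log_exp]
    ring_nf
  have key : (m - 1) * |deriv v x| ^ (m - 2) * deriv (deriv v) x =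
      Real.exp ((m - 1) * (u x) ^ (q + 1) / ((q + 1) * (m - 1))) *
        ((m - 1) * |a| ^ (m - 2) * b + (u x) ^ q * |a| ^ m) := by
    rw [hdvx, hddv, hexp, hEA, hAm, ← hE2]
    field_simp
    ring
  refine ⟨key, fun hyp => ?_⟩
  have hvx0 : deriv v x ≠ 0 := by
    rw [hdvx]; exact mul_ne_zero hEpos.ne' hx
  have hF : HasDerivAt (fun y => |deriv v y| ^ (m - 2) * deriv v y)
      ((m - 1) * |deriv v x| ^ (m - 2) * (E * ((u x) ^ q / (m - 1)) * a * a + E * b)) x := by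
    have := (absrpow_hasDerivAt hm hvx0).comp x hvd2
    exact this
    try ring
  rw [hF.deriv, ← hddv, key, hyp]
  ring
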